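/- For all z ∈ ℂ, |tan(πz)| ≤ 1 + dist(z, ℤ + 1/2)^{-1}, where dist(z, ℤ + 1/2) is the distance from z to the set of half-integers {k + 1/2 : k ∈ ℤ}. -/

import Mathlib

open Real Complex Metric

/-- `|cos z|² = cos² (re z) + sinh² (im z)`. -/
lemma abs_cos_sq' (z : ℂ) :
    (‖Complex.cos z‖) ^ 2 = Real.cos z.re ^ 2 + Real.sinh z.im ^ 2 := by
  rw [Complex.sq_norm, Complex.cos_eq, Complex.normSq_apply]
  simp [Complex.cos_ofReal_re, Complex.sin_ofReal_re, Complex.sinh_ofReal_re,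
    Complex.cosh_ofReal_re]
  have h := Real.cosh_sq z.im
  have h2 := Real.sin_sq_add_cos_sq z.re
  nlinarith [h, h2]

/-- `|sin z|² = sin² (re z) + sinh² (im z)`. -/
lemma abs_sin_sq' (z : ℂ) :
    (‖Complex.sin z‖) ^ 2 = Real.sin z.re ^ 2 + Real.sinh z.im ^ 2 := by
  rw [Complex.sq_norm, Complex.sin_eq, Complex.normSq_apply]
  simp [Complex.cos_ofReal_re, Complex.sin_ofReal_re, Complex.sinh_ofReal_re,
    Complex.cosh_ofReal_re]
  have h := Real.cosh_sq z.im
  have h2 := Real.sin_sq_add_cos_sq z.re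
  nlinarith [h, h2]

lemma half_int_set_eq :
    {w : ℂ | ∃ k : ℤ, w = (k : ℂ) + 1 / 2}
      = (fun w => Complex.cos (Real.pi * w)) ⁻¹' {0} := by
  ext w
  simp only [Set.mem_setOf_eq, Set.mem_preimage, Set.mem_singleton_iff]
  constructor
  · rintro ⟨k, rfl⟩
    rw [Complex.cos_eq_zero_iff]
    exact ⟨k, by push_cast; ring⟩
  · intro h
    obtain ⟨k, hk⟩ := Complex.cos_eq_zero_iff.1 h
    refine ⟨k, ?_⟩
    have hπ : (Real.pi : ℂ) ≠ 0 := Complex.ofReal_ne_zero.2 Real.pi_ne_zero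
    have h2 : (Real.pi : ℂ) * w = (Real.pi : ℂ) * ((k : ℂ) + 1/2) := by
      rw [hk]; ring
    exact mul_left_cancel₀ hπ h2

/-- For all `z ∈ ℂ`, `|tan(πz)| ≤ 1 + dist(z, ℤ + 1/2)⁻¹`, where the distance is to the
set of half-integers `{k + 1/2 : k ∈ ℤ}`. -/
theorem tan_bound_dist_half_integers (z : ℂ) :
    ‖Complex.tan (Real.pi * z)‖
      ≤ 1 + (Metric.infDist z {w : ℂ | ∃ k : ℤ, w = (k : ℂ) + 1 / 2})⁻¹ := by
  set S : Set ℂ := {w : ℂ | ∃ k : ℤ, w = (k : ℂ) + 1 / 2} with hSdef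
  set d : ℝ := Metric.infDist z S with hd
  have hd0 : 0 ≤ d := Metric.infDist_nonneg
  have hSne : S.Nonempty := ⟨1 / 2, 0, by norm_num⟩
  have hSclosed : IsClosed S := by
    rw [hSdef, half_int_set_eq]
    exact IsClosed.preimage (Complex.continuous_cos.comp (continuous_const.mul continuous_id))
      isClosed_singleton
  rcases eq_or_lt_of_le hd0 with hzero | hpos
  · -- d = 0 : z is a half-integer, cos = 0, tan = 0
    have hz : z ∈ S := (hSclosed.mem_iff_infDist_zero hSne).2 hzero.symm
    have hz0 : Complex.cos (Real.pi * z) = 0 := by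
      have h := hz
      rw [hSdef, half_int_set_eq] at h
      simpa using h
    rw [Complex.tan_eq_sin_div_cos, hz0, div_zero, norm_zero]
    positivity
  · -- d > 0
    set x : ℝ := z.re
    set y : ℝ := z.im
    set k : ℤ := ⌊x⌋ with hk
    set u : ℝ := x - k - 1/2 with hu
    have hu_abs : |u| ≤ 1/2 := by
      have h1 := Int.floor_le x
      have h2 := Int.lt_floor_add_one x
      rw [abs_le]; constructor <;> [skip; skip] <;> simp only [hu] <;> linarith
    -- re/im of π z
    have hre : ((Real.pi : ℂ) * z).re = Real.pi * x := by simp [Complex.mul_re]; rfl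
    have him : ((Real.pi : ℂ) * z).im = Real.pi * y := by simp [Complex.mul_im]; rfl
    -- cos²(πx) = sin²(πu)
    have hcos_sq : Real.cos (Real.pi * x) ^ 2 = Real.sin (Real.pi * u) ^ 2 := by
      have hx : Real.pi * x = Real.pi * u + ((k : ℝ) * Real.pi + Real.pi / 2) := by
        rw [hu]; ring
      have hck2 : Real.cos ((k : ℝ) * Real.pi) ^ 2 = 1 := by
        have h := Real.abs_cos_int_mul_pi k
        nlinarith [_root_.sq_abs (Real.cos ((k : ℝ) * Real.pi))]
      rw [hx, Real.cos_add, Real.cos_add, Real.sin_add, Real.sin_int_mul_pi]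
      simp [Real.cos_pi_div_two, Real.sin_pi_div_two]
      nlinarith [hck2]
    -- sin²(πu) ≥ u²
    have hsin_u : u ^ 2 ≤ Real.sin (Real.pi * u) ^ 2 := by
      have habs : Real.sin (Real.pi * u) ^ 2 = Real.sin (Real.pi * |u|) ^ 2 := by
        rcases abs_cases u with ⟨h, _⟩ | ⟨h, _⟩
        · rw [h]
        · rw [h]; rw [show Real.pi * -u = -(Real.pi * u) by ring, Real.sin_neg]; ring
      have h1 : 0 ≤ Real.pi * |u| := by positivity
      have h2 : Real.pi * |u| ≤ Real.pi / 2 := by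
        have := Real.pi_pos
        nlinarith [hu_abs]
      have h3 := Real.mul_le_sin h1 h2
      have h4 : 2 / Real.pi * (Real.pi * |u|) = 2 * |u| := by
        field_simp
      rw [habs]
      rw [h4] at h3
      nlinarith [abs_nonneg u, _root_.sq_abs u]
    -- sinh²(πy) ≥ y²
    have hsinh_y : y ^ 2 ≤ Real.sinh (Real.pi * y) ^ 2 := by
      have habs : |Real.sinh (Real.pi * y)| = Real.sinh (|Real.pi * y|) := Real.abs_sinh _
      have h1 : |Real.pi * y| ≤ Real.sinh (|Real.pi * y|) :=
        Real.self_le_sinh_iff.2 (abs_nonneg _)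
      have h2 : |y| ≤ |Real.pi * y| := by
        rw [abs_mul, abs_of_pos Real.pi_pos]
        nlinarith [Real.pi_gt_three, abs_nonneg y]
      nlinarith [abs_nonneg y, _root_.sq_abs y, _root_.sq_abs (Real.sinh (Real.pi * y)),
        abs_nonneg (Real.pi * y)]
    -- d ≤ |cos(πz)|
    have hdist : d ≤ ‖Complex.cos ((Real.pi : ℂ) * z)‖ := by
      have hmem : ((k : ℂ) + 1/2) ∈ S := ⟨k, rfl⟩
      have h1 : d ≤ dist z ((k : ℂ) + 1/2) := Metric.infDist_le_dist_of_mem hmem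
      have h2 : dist z ((k : ℂ) + 1/2) = Real.sqrt (u ^ 2 + y ^ 2) := by
        rw [Complex.dist_eq, Complex.norm_def, Complex.normSq_apply]
        congr 1
        simp [Complex.sub_re, Complex.sub_im, hu]
        ring
      have h3 : u ^ 2 + y ^ 2 ≤ (‖Complex.cos ((Real.pi : ℂ) * z)‖) ^ 2 := by
        rw [abs_cos_sq', hre, him, hcos_sq]
        linarith [hsin_u, hsinh_y]
      have h4 : Real.sqrt (u ^ 2 + y ^ 2) ≤ ‖Complex.cos ((Real.pi : ℂ) * z)‖ := by
        rw [show (‖Complex.cos ((Real.pi : ℂ) * z)‖)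
            = Real.sqrt ((‖Complex.cos ((Real.pi : ℂ) * z)‖) ^ 2) by
          rw [Real.sqrt_sq (norm_nonneg _)]]
        exact Real.sqrt_le_sqrt h3
      linarith
    set c : ℝ := ‖Complex.cos ((Real.pi : ℂ) * z)‖ with hc
    have hcpos : 0 < c := lt_of_lt_of_le hpos hdist
    -- |sin(πz)| ≤ c + 1
    have hsin_le : ‖Complex.sin ((Real.pi : ℂ) * z)‖ ≤ c + 1 := by
      have h1 := abs_sin_sq' ((Real.pi : ℂ) * z)
      have h2 := abs_cos_sq' ((Real.pi : ℂ) * z)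
      have h3 := Real.sin_sq_add_cos_sq (((Real.pi : ℂ) * z).re)
      nlinarith [norm_nonneg (Complex.sin ((Real.pi : ℂ) * z)), hcpos]
    rw [Complex.tan_eq_sin_div_cos, norm_div]
    calc ‖Complex.sin ((Real.pi : ℂ) * z)‖ / c
        ≤ (c + 1) / c := by gcongr
      _ = 1 + c⁻¹ := by field_simp
      _ ≤ 1 + d⁻¹ := by
          have : d⁻¹ ≥ c⁻¹ := inv_anti₀ hpos hdist
          linarith
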